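/- arXiv:1301.6144 — 3 statements merged into one kernel-verified Lean document; each statement's English description precedes it below -/
import Mathlib

section
/- Let H be a complex separable infinite-dimensional Hilbert space and let T be a bounded linear operator on H for which there exists an increasing sequence (M_n)_{n ≥ 0} of closed subspaces of H such that each M_n is infinite-dimensional, M_n has infinite codimension in M_{n+1} for each n ≥ 0, ∪_{n ≥ 0} M_n is dense in H, and HC(T)^c = ∪_{n ≥ 0} M_n. Let (E_n)_{n ≥ 0} be any sequence of closed subspaces of H satisfying: (1) E_n ⊆ E_{n+1} for each n ≥ 0; (2) each E_n is infinite-dimensional and has infinite codimension as a subspace of E_{n+1}; (3) ∪_{n ≥ 0} E_n is dense in H. Then there exists a unitary operator U on H such that HC(U T U^{-1})^c = ∪_{n ≥ 0} E_n. -/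
open scoped InnerProductSpace
open Submodule Set


lemma orthonormal_set_countable {H : Type} [NormedAddCommGroup H] [InnerProductSpace ℂ H]
    [TopologicalSpace.SeparableSpace H] {s : Set H}
    (hs : Orthonormal ℂ ((↑) : s → H)) : s.Countable := by
  haveI : SecondCountableTopology H := UniformSpace.secondCountable_of_separable H
  have hdisc : DiscreteTopology s := by
    rw [discreteTopology_iff_isOpen_singleton]
    intro a
    have key : ({a} : Set s) = (Subtype.val ⁻¹' Metric.ball (a : H) 1 : Set s) := by
      ext y
      simp only [Set.mem_singleton_iff, Set.mem_preimage, Metric.mem_ball]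
      constructor
      · rintro rfl; simp
      · intro hy
        by_contra hne
        have hinner : ⟪(y : H), (a : H)⟫_ℂ = 0 := hs.2 hne
        have h1 : ‖(y : H)‖ = 1 := hs.1 y
        have h2 : ‖(a : H)‖ = 1 := hs.1 a
        have hsq : ‖(y : H) - (a : H)‖ ^ 2 = 2 := by
          rw [@norm_sub_sq ℂ, hinner, h1, h2]
          norm_num
        have hd : ‖(y : H) - (a : H)‖ = dist (y : H) (a : H) := (dist_eq_norm _ _).symm
        have hnn := dist_nonneg (x := (y : H)) (y := (a : H))
        nlinarith [hy]
    rw [key]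
    exact Metric.isOpen_ball.preimage continuous_subtype_val
  exact (HereditarilyLindelof_LindelofSets s).countable hdisc


lemma exists_orthonormal_dense_seq {H : Type} [NormedAddCommGroup H] [InnerProductSpace ℂ H]
    [TopologicalSpace.SeparableSpace H] [CompleteSpace H] (K : Submodule ℂ H) (hKc : IsClosed (K : Set H))
    (hKinf : ¬ FiniteDimensional ℂ K) :
    ∃ v : ℕ → H, Orthonormal ℂ v ∧ (∀ i, v i ∈ K) ∧
      (K : Set H) ⊆ closure (Submodule.span ℂ (Set.range v) : Set H) := by
  haveI : CompleteSpace K := hKc.completeSpace_coe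
  haveI : SecondCountableTopology H := UniformSpace.secondCountable_of_separable H
  obtain ⟨w, b, hb⟩ := exists_hilbertBasis ℂ K
  have hon : Orthonormal ℂ ((↑) : w → K) := hb ▸ b.orthonormal
  have hcnt : w.Countable := orthonormal_set_countable hon
  have hinf : w.Infinite := by
    by_contra h
    rw [Set.not_infinite] at h
    apply hKinf
    have hfd : FiniteDimensional ℂ (Submodule.span ℂ (Set.range ⇑b)) := by
      apply FiniteDimensional.span_of_finite
      rw [hb, Subtype.range_coe]
      exact h
    have hclosed := (Submodule.span ℂ (Set.range ⇑b)).closed_of_finiteDimensional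
    have htop := b.dense_span
    rw [hclosed.submodule_topologicalClosure_eq] at htop
    rw [htop] at hfd
    exact (Submodule.topEquiv (R := ℂ) (M := K)).finiteDimensional
  haveI : Countable w := hcnt.to_subtype
  haveI : Infinite w := hinf.to_subtype
  obtain ⟨d⟩ := nonempty_denumerable ↥w
  let e : ℕ ≃ w := (Denumerable.eqv ↥w).symm
  let v' : ℕ → K := fun n => b (e n)
  have honv' : Orthonormal ℂ v' := b.orthonormal.comp ⇑e e.injective
  refine ⟨fun n => ↑(v' n), honv'.comp_linearIsometry K.subtypeₗᵢ, fun i => (v' i).2, ?_⟩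
  intro x hx
  have hmem : (⟨x, hx⟩ : K) ∈ (Submodule.span ℂ (Set.range ⇑b)).topologicalClosure := by
    rw [b.dense_span]; trivial
  have hxcl : (⟨x, hx⟩ : K) ∈ closure ((Submodule.span ℂ (Set.range ⇑b)) : Set K) := hmem
  have himg : x ∈ closure (Subtype.val '' ((Submodule.span ℂ (Set.range ⇑b)) : Set K)) := by
    exact image_closure_subset_closure_image
      (continuous_subtype_val (p := fun y => y ∈ K)) ⟨_, hxcl, rfl⟩
  refine closure_mono ?_ himg
  have hr : Set.range v' = Set.range ⇑b := e.surjective.range_comp ⇑b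
  have hmap : Subtype.val '' ((Submodule.span ℂ (Set.range ⇑b)) : Set K)
      = ((Submodule.span ℂ (Set.range ⇑b)).map K.subtype : Set H) := rfl
  rw [hmap, Submodule.map_span]
  refine SetLike.coe_subset_coe.2 (Submodule.span_le.2 ?_)
  rintro _ ⟨k, hk, rfl⟩
  obtain ⟨n, hn⟩ : k ∈ Set.range v' := hr.symm ▸ hk
  exact Submodule.subset_span ⟨n, congrArg Subtype.val hn⟩


lemma exists_adapted_basis {H : Type} [NormedAddCommGroup H] [InnerProductSpace ℂ H]
    [CompleteSpace H] [TopologicalSpace.SeparableSpace H]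
    (M : ℕ → Submodule ℂ H)
    (hMclosed : ∀ n, IsClosed (M n : Set H))
    (hMmono : ∀ n, M n ≤ M (n + 1))
    (hMinf : ∀ n, ¬ FiniteDimensional ℂ (M n))
    (hMcodim : ∀ n, ¬ FiniteDimensional ℂ
      (↥(M (n + 1)) ⧸ Submodule.comap (M (n + 1)).subtype (M n)))
    (hMdense : Dense (⋃ n, (M n : Set H))) :
    ∃ b : HilbertBasis (ℕ × ℕ) ℂ H,
      ∀ n (x : H), x ∈ M n ↔ ∀ p : ℕ × ℕ, n < p.1 → b.repr x p = 0 := by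
  classical
  have hMono : Monotone M := monotone_nat_of_le_succ hMmono
  -- the successive orthogonal pieces
  set A : ℕ → Submodule ℂ H := fun k => Nat.rec (M 0) (fun k _ => M (k + 1) ⊓ (M k)ᗮ) k with hA
  have hA0 : A 0 = M 0 := rfl
  have hAsucc : ∀ k, A (k + 1) = M (k + 1) ⊓ (M k)ᗮ := fun k => rfl
  have hAleM : ∀ k, A k ≤ M k := by
    intro k; cases k with
    | zero => exact le_rfl
    | succ k => rw [hAsucc]; exact inf_le_left
  have hAclosed : ∀ k, IsClosed (A k : Set H) := by
    intro k; cases k with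
    | zero => exact hMclosed 0
    | succ k =>
      rw [hAsucc]
      rw [Submodule.coe_inf]
      exact (hMclosed (k + 1)).inter (M k).isClosed_orthogonal
  -- orthogonality of higher pieces to lower M's
  have hAorth : ∀ n k, n < k → ∀ x ∈ M n, ∀ y ∈ A k, ⟪x, y⟫_ℂ = 0 := by
    intro n k hnk x hx y hy
    obtain ⟨k, rfl⟩ : ∃ m, k = m + 1 := ⟨k - 1, (Nat.succ_pred_eq_of_pos (Nat.zero_lt_of_lt hnk)).symm⟩
    rw [hAsucc] at hy
    have hy2 : y ∈ (M k)ᗮ := hy.2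
    exact hy2 _ (hMono (Nat.lt_succ_iff.1 hnk) hx)
  -- infinite-dimensionality of the pieces, and the sup property
  have key : ∀ n, ¬ FiniteDimensional ℂ (A (n + 1)) ∧ M (n + 1) ≤ M n ⊔ A (n + 1) := by
    intro n
    haveI : CompleteSpace (M (n + 1)) := (hMclosed (n + 1)).completeSpace_coe
    set p : Submodule ℂ (M (n + 1)) := Submodule.comap (M (n + 1)).subtype (M n) with hp
    have hpc : IsClosed (p : Set (M (n + 1))) :=
      (hMclosed n).preimage continuous_subtype_val
    haveI : CompleteSpace p := hpc.completeSpace_coe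
    have hcompl : IsCompl p pᗮ := Submodule.isCompl_orthogonal_of_hasOrthogonalProjection
    -- any element of pᗮ, coerced to H, lies in A (n+1)
    have hmemA : ∀ c : M (n + 1), c ∈ pᗮ → (c : H) ∈ A (n + 1) := by
      intro c hc
      rw [hAsucc]
      refine ⟨c.2, ?_⟩
      intro u hu
      have hup : (⟨u, hMmono n hu⟩ : M (n + 1)) ∈ p := hu
      have := hc _ hup
      rwa [Submodule.coe_inner] at this
    constructor
    · intro hfd
      have hpfd : FiniteDimensional ℂ pᗮ := by
        let f : pᗮ →ₗ[ℂ] A (n + 1) :=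
          LinearMap.codRestrict (A (n + 1)) (((M (n + 1)).subtype).comp pᗮ.subtype)
            (fun c => hmemA _ c.2)
        have hinj : Function.Injective f := by
          intro a b hab
          have h1 : ((f a : A (n + 1)) : H) = ((f b : A (n + 1)) : H) :=
            congrArg Subtype.val hab
          have h2 : (((a : M (n + 1)) : H)) = (((b : M (n + 1)) : H)) := h1
          exact Subtype.ext (Subtype.ext h2)
        exact FiniteDimensional.of_injective f hinj
      haveI := hpfd
      exact hMcodim n (Submodule.quotientEquivOfIsCompl p pᗮ hcompl).symm.finiteDimensional
    · intro x hx
      have hxt : (⟨x, hx⟩ : M (n + 1)) ∈ p ⊔ pᗮ := by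
        rw [hcompl.sup_eq_top]; trivial
      obtain ⟨a, ha, c, hc, hac⟩ := Submodule.mem_sup.1 hxt
      refine Submodule.mem_sup.2 ⟨a, ha, c, hmemA _ hc, ?_⟩
      exact congrArg Subtype.val hac
  have hAinf : ∀ k, ¬ FiniteDimensional ℂ (A k) := by
    intro k; cases k with
    | zero => exact hMinf 0
    | succ k => exact (key k).1
  -- choose orthonormal sequences in each piece
  choose v hv hvmem hvdense using fun k =>
    exists_orthonormal_dense_seq (A k) (hAclosed k) (hAinf k)
  set e : ℕ × ℕ → H := fun q => v q.1 q.2 with he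
  have hone : Orthonormal ℂ e := by
    rw [orthonormal_iff_ite]
    intro i j
    rcases eq_or_ne i.1 j.1 with h1 | h1
    · obtain ⟨i1, i2⟩ := i; obtain ⟨j1, j2⟩ := j
      dsimp at h1; subst h1
      have := orthonormal_iff_ite.1 (hv i1) i2 j2
      simpa [Prod.ext_iff] using this
    · rw [if_neg (fun h => h1 (congrArg Prod.fst h))]
      rcases lt_or_gt_of_ne h1 with h | h
      · exact hAorth i.1 j.1 h _ (hAleM _ (hvmem i.1 i.2)) _ (hvmem j.1 j.2)
      · rw [← inner_conj_symm]
        rw [hAorth j.1 i.1 h _ (hAleM _ (hvmem j.1 j.2)) _ (hvmem i.1 i.2)]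
        simp
  -- dense span
  have hspan : ⊤ ≤ (Submodule.span ℂ (Set.range e)).topologicalClosure := by
    set S := (Submodule.span ℂ (Set.range e)).topologicalClosure with hS
    have hAS : ∀ k, A k ≤ S := by
      intro k x hx
      have h1 : (x : H) ∈ closure (Submodule.span ℂ (Set.range (v k)) : Set H) :=
        hvdense k hx
      have h2 : (Submodule.span ℂ (Set.range (v k)) : Set H)
          ⊆ (Submodule.span ℂ (Set.range e) : Set H) := by
        refine SetLike.coe_subset_coe.2 (Submodule.span_mono ?_)
        rintro _ ⟨j, rfl⟩
        exact ⟨(k, j), rfl⟩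
      exact closure_mono h2 h1
    have hMS : ∀ n, M n ≤ S := by
      intro n; induction n with
      | zero => exact le_trans (le_of_eq hA0.symm) (hAS 0)
      | succ n ih => exact le_trans (key n).2 (sup_le ih (hAS (n + 1)))
    intro x _
    have hxcl : x ∈ closure (⋃ n, (M n : Set H)) := hMdense x
    have : closure (⋃ n, (M n : Set H)) ⊆ (S : Set H) := by
      refine closure_minimal ?_ (Submodule.span ℂ (Set.range e)).isClosed_topologicalClosure
      exact Set.iUnion_subset fun n => hMS n
    exact this hxcl
  refine ⟨HilbertBasis.mk hone hspan, ?_⟩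
  set b := HilbertBasis.mk hone hspan with hb
  have hbe : ⇑b = e := HilbertBasis.coe_mk hone hspan
  intro n x
  constructor
  · intro hx p hp
    rw [b.repr_apply_apply, hbe]
    rw [← inner_conj_symm]
    rw [hAorth n p.1 hp x hx _ (hvmem p.1 p.2)]
    simp
  · intro hrepr
    have hsum := b.hasSum_repr x
    refine (hMclosed n).mem_of_tendsto hsum (Filter.Eventually.of_forall ?_)
    intro t
    refine Submodule.sum_mem _ ?_
    intro p _
    rcases le_or_gt p.1 n with h | h
    · exact Submodule.smul_mem _ _ (hMono h (hAleM p.1 (hbe ▸ hvmem p.1 p.2)))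
    · rw [hrepr p h, zero_smul]
      exact (M n).zero_mem


/-- Let `T` be a bounded operator on a complex separable infinite-dimensional Hilbert space `H`
whose set of non-hypercyclic vectors is the dense union of an increasing sequence `(M n)` of
infinite-dimensional closed subspaces, each of infinite codimension in the next. Then for any
sequence `(E n)` of closed subspaces with the same three properties, there is a unitary `U` on
`H` such that the set of non-hypercyclic vectors of `U T U⁻¹` is `⋃ n, E n`. -/
theorem stmt_11 (H : Type) [NormedAddCommGroup H] [InnerProductSpace ℂ H] [CompleteSpace H]
    [TopologicalSpace.SeparableSpace H] (hdim : ¬ FiniteDimensional ℂ H)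
    (T : H →L[ℂ] H) (M : ℕ → Submodule ℂ H)
    (hMclosed : ∀ n, IsClosed (M n : Set H))
    (hMmono : ∀ n, M n ≤ M (n + 1))
    (hMinf : ∀ n, ¬ FiniteDimensional ℂ (M n))
    (hMcodim : ∀ n, ¬ FiniteDimensional ℂ
      (↥(M (n + 1)) ⧸ Submodule.comap (M (n + 1)).subtype (M n)))
    (hMdense : Dense (⋃ n, (M n : Set H)))
    (hMHC : {x : H | ¬ Dense (Set.range fun n : ℕ => (T ^ n) x)} = ⋃ n, (M n : Set H))
    (E : ℕ → Submodule ℂ H)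
    (hEclosed : ∀ n, IsClosed (E n : Set H))
    (hEmono : ∀ n, E n ≤ E (n + 1))
    (hEinf : ∀ n, ¬ FiniteDimensional ℂ (E n))
    (hEcodim : ∀ n, ¬ FiniteDimensional ℂ
      (↥(E (n + 1)) ⧸ Submodule.comap (E (n + 1)).subtype (E n)))
    (hEdense : Dense (⋃ n, (E n : Set H))) :
    ∃ U : H ≃ₗᵢ[ℂ] H,
      {x : H | ¬ Dense (Set.range fun n : ℕ =>
        (((U.toContinuousLinearEquiv : H →L[ℂ] H).comp
          (T.comp (U.symm.toContinuousLinearEquiv : H →L[ℂ] H))) ^ n) x)} =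
      ⋃ n, (E n : Set H) := by
  obtain ⟨bM, hbM⟩ := exists_adapted_basis M hMclosed hMmono hMinf hMcodim hMdense
  obtain ⟨bE, hbE⟩ := exists_adapted_basis E hEclosed hEmono hEinf hEcodim hEdense
  refine ⟨bM.repr.trans bE.repr.symm, ?_⟩
  set U : H ≃ₗᵢ[ℂ] H := bM.repr.trans bE.repr.symm with hU
  have hUmem : ∀ (n : ℕ) (x : H), x ∈ M n ↔ U x ∈ E n := by
    intro n x
    rw [hbM n x, hbE n (U x)]
    have : bE.repr (U x) = bM.repr x := by
      simp [hU]
    rw [this]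
  set S : H →L[ℂ] H := (U.toContinuousLinearEquiv : H →L[ℂ] H).comp
      (T.comp (U.symm.toContinuousLinearEquiv : H →L[ℂ] H)) with hS
  have hSapp : ∀ x, S x = U (T (U.symm x)) := by intro x; simp [hS]
  have hSpow : ∀ (k : ℕ) (x : H), (S ^ k) x = U ((T ^ k) (U.symm x)) := by
    intro k
    induction k with
    | zero => intro x; simp
    | succ k ih =>
      intro x
      rw [pow_succ', pow_succ']
      rw [ContinuousLinearMap.mul_apply, ContinuousLinearMap.mul_apply]
      rw [hSapp, ih]
      congr 1
      congr 1
      rw [LinearIsometryEquiv.symm_apply_apply]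
  have hdense_iff : ∀ x : H, Dense (Set.range fun k : ℕ => (S ^ k) x) ↔
      Dense (Set.range fun k : ℕ => (T ^ k) (U.symm x)) := by
    intro x
    have hr : (Set.range fun k : ℕ => (S ^ k) x)
        = ⇑U.symm ⁻¹' (Set.range fun k : ℕ => (T ^ k) (U.symm x)) := by
      ext y
      constructor
      · rintro ⟨k, rfl⟩
        refine ⟨k, ?_⟩
        show (T ^ k) (U.symm x) = U.symm ((S ^ k) x)
        rw [hSpow, LinearIsometryEquiv.symm_apply_apply]
      · rintro ⟨k, hk⟩
        refine ⟨k, ?_⟩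
        show (S ^ k) x = y
        simp only [] at hk
        rw [hSpow, hk, LinearIsometryEquiv.apply_symm_apply]
    rw [hr]
    have hoq : IsOpenQuotientMap ⇑(U.symm) :=
      ⟨U.symm.surjective, U.symm.continuous, U.symm.toHomeomorph.isOpenMap⟩
    exact hoq.dense_preimage_iff
  ext x
  simp only [Set.mem_setOf_eq, Set.mem_iUnion, SetLike.mem_coe]
  rw [hdense_iff x]
  have hx' : ¬ Dense (Set.range fun k : ℕ => (T ^ k) (U.symm x)) ↔
      U.symm x ∈ {y : H | ¬ Dense (Set.range fun k : ℕ => (T ^ k) y)} := Iff.rfl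
  rw [hx', hMHC]
  simp only [Set.mem_iUnion, SetLike.mem_coe]
  constructor
  · rintro ⟨n, hn⟩
    exact ⟨n, by rw [← LinearIsometryEquiv.apply_symm_apply U x]; exact (hUmem n _).1 hn⟩
  · rintro ⟨n, hn⟩
    refine ⟨n, (hUmem n _).2 ?_⟩
    rwa [LinearIsometryEquiv.apply_symm_apply]
end

section
/- Let H be a complex separable infinite-dimensional Hilbert space. There exist two sequences (E_n)_{n ≥ 0} and (F_n)_{n ≥ 0} of closed subspaces of H such that each sequence satisfies: (1) it is increasing (E_n ⊆ E_{n+1} and F_n ⊆ F_{n+1}); (2) each subspace is infinite-dimensional and has infinite codimension in the next one; (3) its union is dense in H; and moreover (∪_{n ≥ 0} E_n) ∩ (∪_{n ≥ 0} F_n) = {0}. -/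
noncomputable section

open Filter Polynomial Finset

namespace Stmt12

local notation "⟪" x ", " y "⟫" => @inner ℂ _ _ x y

/-- the ratios: a strictly increasing sequence in `(0,1)` tending to `3/4`. -/
def ν (j : ℕ) : ℝ := 3 / 4 - 1 / (j + 2)

lemma ν_pos (j : ℕ) : 0 < ν j := by
  have hj : (0 : ℝ) ≤ (j : ℝ) := Nat.cast_nonneg j
  have h2 : (2 : ℝ) ≤ (j : ℝ) + 2 := by linarith
  have : 1 / ((j : ℝ) + 2) ≤ 1 / 2 :=
    one_div_le_one_div_of_le (by norm_num) h2
  unfold ν; linarith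

lemma ν_lt (j : ℕ) : ν j < 3 / 4 := by
  have : 0 < 1 / ((j : ℝ) + 2) := by positivity
  unfold ν; linarith

lemma ν_lt_one (j : ℕ) : ν j < 1 := (ν_lt j).trans (by norm_num)

lemma ν_nonneg (j : ℕ) : 0 ≤ ν j := (ν_pos j).le

lemma ν_strictMono : StrictMono ν := by
  intro a b hab
  have ha : (0 : ℝ) < (a : ℝ) + 2 := by positivity
  have hb : (0 : ℝ) < (b : ℝ) + 2 := by positivity
  have : 1 / ((b : ℝ) + 2) < 1 / ((a : ℝ) + 2) := by
    apply one_div_lt_one_div_of_lt ha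
    have : (a : ℝ) < b := by exact_mod_cast hab
    linarith
  unfold ν; linarith

lemma ν_inj : Function.Injective ν := ν_strictMono.injective

lemma ν_tendsto : Tendsto ν atTop (nhds (3 / 4 : ℝ)) := by
  have h0 : Tendsto (fun j : ℕ => ((j : ℝ) + 2)) atTop atTop :=
    tendsto_atTop_add_const_right _ 2 tendsto_natCast_atTop_atTop
  have h : Tendsto (fun j : ℕ => ((j : ℝ) + 2)⁻¹) atTop (nhds 0) := h0.inv_tendsto_atTop
  have h2 := tendsto_const_nhds (x := (3 / 4 : ℝ)) (f := atTop (α := ℕ)) |>.sub h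
  have hfun : ν = fun j : ℕ => 3 / 4 - ((j : ℝ) + 2)⁻¹ := by
    funext j; simp [ν, one_div]
  rw [hfun]
  simpa using h2

/-- The polynomial with roots `ν 0, …, ν m`. -/
def P (m : ℕ) : Polynomial ℂ := ∏ j ∈ Finset.range (m + 1), (X - C ((ν j : ℝ) : ℂ))

lemma P_monic (m : ℕ) : (P m).Monic :=
  monic_prod_of_monic _ _ fun j _ => monic_X_sub_C _

lemma P_natDegree (m : ℕ) : (P m).natDegree = m + 1 := by
  rw [P, natDegree_prod _ _ fun j _ => X_sub_C_ne_zero _]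
  simp [natDegree_X_sub_C]

lemma P_eval_zero {m j : ℕ} (hj : j ≤ m) : (P m).eval ((ν j : ℝ) : ℂ) = 0 := by
  rw [P, eval_prod]
  apply Finset.prod_eq_zero (Finset.mem_range.2 (by omega : j < m + 1))
  simp

lemma P_eval_ne_zero {m j : ℕ} (hj : m < j) : (P m).eval ((ν j : ℝ) : ℂ) ≠ 0 := by
  rw [P, eval_prod, Finset.prod_ne_zero_iff]
  intro i hi
  rw [Finset.mem_range] at hi
  simp only [eval_sub, eval_X, eval_C, sub_ne_zero]
  intro hc
  have := ν_inj (Complex.ofReal_injective hc)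
  omega

lemma P_coeff_zero_ne_zero (m : ℕ) : (P m).coeff 0 ≠ 0 := by
  rw [Polynomial.coeff_zero_eq_eval_zero, P, eval_prod, Finset.prod_ne_zero_iff]
  intro j hj
  simp only [eval_sub, eval_X, eval_C, zero_sub, neg_ne_zero, Complex.ofReal_ne_zero]
  exact (ν_pos j).ne'

lemma not_finiteDimensional_of_linearIndependent {V : Type} [AddCommGroup V] [Module ℂ V]
    (v : ℕ → V) (hv : LinearIndependent ℂ v) : ¬ FiniteDimensional ℂ V := by
  intro hfin
  have h := (hv.comp ((↑) : Fin (Module.finrank ℂ V + 1) → ℕ)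
    Fin.val_injective).fintype_card_le_finrank
  simp only [Fintype.card_fin] at h
  omega

section Main

variable {H : Type} [NormedAddCommGroup H] [InnerProductSpace ℂ H] [CompleteSpace H]

variable (e : ℕ × ℕ → H)

/-- the geometric vectors. -/
def g (b j : ℕ) : H := ∑' k : ℕ, ((ν j : ℂ) ^ k) • e (b, k)

/-- the subspaces `E n`. -/
def E (n : ℕ) : Submodule ℂ H where
  carrier := {x | ∀ b k, n < k → ⟪e (b, k), x⟫ = 0}
  add_mem' := fun {a b} ha hb => by
    intro b' k hk
    rw [inner_add_right, ha b' k hk, hb b' k hk, add_zero]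
  zero_mem' := fun b k _ => inner_zero_right _
  smul_mem' := fun c {x} hx => by
    intro b k hk
    rw [inner_smul_right, hx b k hk, mul_zero]

/-- the generators of `F m`. -/
def SF (m : ℕ) : Set H := {v | ∃ b j, j ≤ m ∧ g e b j = v}

/-- the subspaces `F m`. -/
def F (m : ℕ) : Submodule ℂ H := (Submodule.span ℂ (SF e m)).topologicalClosure

lemma isClosed_F (m : ℕ) : IsClosed ((F e m : Set H)) :=
  Submodule.isClosed_topologicalClosure _

lemma g_mem_F {b j m : ℕ} (hj : j ≤ m) : g e b j ∈ F e m :=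
  Submodule.le_topologicalClosure _ (Submodule.subset_span ⟨b, j, hj, rfl⟩)

/-- the test functionals. -/
def Ψ (b d : ℕ) (Q : ℂ[X]) : H :=
  ∑ k ∈ Finset.range (d + 1), ((starRingEnd ℂ) (Q.coeff k)) • e (b, k)

lemma inner_Ψ (b d : ℕ) (Q : ℂ[X]) (x : H) :
    ⟪Ψ e b d Q, x⟫ = ∑ k ∈ Finset.range (d + 1), Q.coeff k * ⟪e (b, k), x⟫ := by
  rw [Ψ, sum_inner]
  congr 1
  funext k
  rw [inner_smul_left, RingHomCompTriple.comp_apply, RingHom.id_apply]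

lemma isClosed_E (n : ℕ) : IsClosed ((E e n : Set H)) := by
  have : (E e n : Set H) = ⋂ (b : ℕ), ⋂ (k : ℕ), ⋂ (_ : n < k), {x : H | ⟪e (b, k), x⟫ = 0} := by
    ext x
    simp only [Set.mem_iInter, Set.mem_setOf_eq]
    rfl
  rw [this]
  apply isClosed_iInter; intro b
  apply isClosed_iInter; intro k
  apply isClosed_iInter; intro _
  exact isClosed_eq (innerSL ℂ (e (_, _))).continuous continuous_const

lemma E_mono {n n' : ℕ} (h : n ≤ n') : E e n ≤ E e n' := by
  intro x hx b k hk
  exact hx b k (lt_of_le_of_lt h hk)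

lemma F_mono {m m' : ℕ} (h : m ≤ m') : F e m ≤ F e m' := by
  apply Submodule.topologicalClosure_mono
  apply Submodule.span_mono
  rintro v ⟨b, j, hj, rfl⟩
  exact ⟨b, j, hj.trans h, rfl⟩

variable (he : Orthonormal ℂ e)
include he

lemma summable_g (b j : ℕ) : Summable (fun k : ℕ => ((ν j : ℂ) ^ k) • e (b, k)) := by
  apply Summable.of_norm
  have : ∀ k : ℕ, ‖((ν j : ℂ) ^ k) • e (b, k)‖ = (ν j) ^ k := by
    intro k
    rw [norm_smul, he.1 (b, k), mul_one, norm_pow, Complex.norm_real, Real.norm_eq_abs,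
      abs_of_nonneg (ν_nonneg j)]
  rw [funext this]
  exact summable_geometric_of_lt_one (ν_nonneg j) (ν_lt_one j)

lemma inner_e_e (i i' : ℕ × ℕ) : ⟪e i, e i'⟫ = if i = i' then 1 else 0 := by
  classical exact orthonormal_iff_ite.mp he i i'

lemma coord_g (b k b' j : ℕ) :
    ⟪e (b, k), g e b' j⟫ = if b = b' then ((ν j : ℂ) ^ k) else 0 := by
  classical
  have h := ContinuousLinearMap.map_tsum (innerSL ℂ (e (b, k))) (summable_g e he b' j)
  simp only [innerSL_apply_apply] at h
  rw [g, h]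
  simp only [inner_smul_right, inner_e_e e he]
  by_cases hb : b = b'
  · subst hb
    rw [if_pos rfl]
    rw [tsum_eq_single k]
    · simp
    · intro i hik
      rw [if_neg (fun hh => hik (congrArg Prod.snd hh).symm), mul_zero]
  · rw [if_neg hb]
    convert tsum_zero with i
    rw [if_neg (fun hh => hb (congrArg Prod.fst hh)), mul_zero]

lemma summable_coord (b j : ℕ) (x : H) :
    Summable (fun k : ℕ => ((ν j : ℂ) ^ k) * ⟪x, e (b, k)⟫) := by
  apply Summable.of_norm
  apply Summable.of_nonneg_of_le (fun k => norm_nonneg _)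
    (fun k => ?_) (Summable.mul_right ‖x‖
      (summable_geometric_of_lt_one (ν_nonneg j) (ν_lt_one j)))
  rw [norm_mul]
  have h1 : ‖((ν j : ℂ) ^ k)‖ = (ν j) ^ k := by
    rw [norm_pow, Complex.norm_real, Real.norm_eq_abs, abs_of_nonneg (ν_nonneg j)]
  have h2 : ‖⟪x, e (b, k)⟫‖ ≤ ‖x‖ := by
    calc ‖⟪x, e (b, k)⟫‖ ≤ ‖x‖ * ‖e (b, k)‖ := norm_inner_le_norm _ _
    _ = ‖x‖ := by rw [he.1 (b, k), mul_one]
  rw [h1]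
  calc (ν j) ^ k * ‖⟪x, e (b, k)⟫‖ ≤ (ν j) ^ k * ‖x‖ := by
        apply mul_le_mul_of_nonneg_left h2 (pow_nonneg (ν_nonneg j) k)
  _ = _ := by ring

lemma inner_g_left (b j : ℕ) (x : H) :
    ⟪g e b j, x⟫ = ∑' k : ℕ, ((ν j : ℂ) ^ k) * ⟪e (b, k), x⟫ := by
  have h1 : ⟪x, g e b j⟫ = ∑' k : ℕ, ((ν j : ℂ) ^ k) * ⟪x, e (b, k)⟫ := by
    have h := ContinuousLinearMap.map_tsum (innerSL ℂ x) (summable_g e he b j)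
    simp only [innerSL_apply_apply] at h
    rw [g, h]
    simp only [inner_smul_right]
  rw [← inner_conj_symm (g e b j) x, h1]
  rw [show ((starRingEnd ℂ) (∑' k : ℕ, ((ν j : ℂ) ^ k) * ⟪x, e (b, k)⟫))
      = ∑' k : ℕ, (starRingEnd ℂ) (((ν j : ℂ) ^ k) * ⟪x, e (b, k)⟫) from tsum_star]
  congr 1
  funext k
  rw [map_mul]
  congr 1
  · rw [← Complex.ofReal_pow]
    exact Complex.conj_ofReal _
  · exact inner_conj_symm _ _

lemma inner_Ψ_g (b d b' j : ℕ) (Q : ℂ[X]) (hdeg : Q.natDegree < d + 1) :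
    ⟪Ψ e b d Q, g e b' j⟫ = if b = b' then Q.eval ((ν j : ℂ)) else 0 := by
  rw [inner_Ψ e]
  simp only [coord_g e he]
  by_cases hb : b = b'
  · simp only [if_pos hb, mul_ite, mul_zero]
    rw [Polynomial.eval_eq_sum_range' hdeg]
  · simp [if_neg hb]

lemma inner_Ψ_F_zero (b d m : ℕ) (Q : ℂ[X]) (hdeg : Q.natDegree < d + 1)
    (hQ : ∀ j ≤ m, Q.eval ((ν j : ℂ)) = 0) {x : H} (hx : x ∈ F e m) :
    ⟪Ψ e b d Q, x⟫ = 0 := by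
  set φ : H →L[ℂ] ℂ := innerSL ℂ (Ψ e b d Q) with hφ
  have hker : F e m ≤ LinearMap.ker (φ : H →ₗ[ℂ] ℂ) := by
    apply Submodule.topologicalClosure_minimal
    · rw [Submodule.span_le]
      rintro v ⟨b', j, hj, rfl⟩
      simp only [SetLike.mem_coe, LinearMap.mem_ker, ContinuousLinearMap.coe_coe, hφ,
        innerSL_apply_apply]
      rw [inner_Ψ_g e he b d b' j Q hdeg]
      by_cases hb : b = b'
      · rw [if_pos hb]; exact hQ j hj
      · rw [if_neg hb]
    · exact ContinuousLinearMap.isClosed_ker φ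
  exact hker hx

lemma e_mem_E {b k n : ℕ} (hk : k ≤ n) : e (b, k) ∈ E e n := by
  intro b' k' hk'
  rw [inner_e_e e he]
  rw [if_neg]
  rintro ⟨rfl, rfl⟩
  omega

/-- The analytic key lemma: if `x` is orthogonal to all `g b j` (fixed block `b`),
then all coordinates of `x` in block `b` vanish. -/
lemma coords_zero_of_inner_g_zero (b : ℕ) (x : H)
    (hx : ∀ j, ⟪g e b j, x⟫ = 0) : ∀ k, ⟪e (b, k), x⟫ = 0 := by
  classical
  set c : ℕ → ℂ := fun k => ⟪e (b, k), x⟫ with hc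
  set p : FormalMultilinearSeries ℂ ℂ ℂ :=
    fun n => ContinuousMultilinearMap.mkPiRing ℂ (Fin n) (c n) with hp
  have hcb : ∀ k, ‖c k‖ ≤ ‖x‖ := by
    intro k
    calc ‖c k‖ ≤ ‖e (b, k)‖ * ‖x‖ := norm_inner_le_norm _ _
    _ = ‖x‖ := by rw [he.1 (b, k), one_mul]
  have hrad : 1 ≤ p.radius := by
    apply p.le_radius_of_bound ‖x‖ (r := 1)
    intro n
    rw [hp]
    simp only [ContinuousMultilinearMap.norm_mkPiRing, NNReal.coe_one, one_pow, mul_one]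
    exact hcb n
  have hradpos : 0 < p.radius := lt_of_lt_of_le one_pos hrad
  have hball : HasFPowerSeriesOnBall p.sum p 0 p.radius :=
    p.hasFPowerSeriesOnBall hradpos
  have hmem : ∀ z : ℂ, ‖z‖ < 1 → z ∈ Metric.eball (0 : ℂ) p.radius := by
    intro z hz
    rw [Metric.mem_eball, edist_zero_right]
    calc (‖z‖₊ : ENNReal) < 1 := by
          rw [← ENNReal.coe_one]
          exact_mod_cast hz
    _ ≤ p.radius := hrad
  have hsum : ∀ z : ℂ, p.sum z = ∑' n : ℕ, ((z : ℂ) ^ n) * c n := by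
    intro z
    rw [FormalMultilinearSeries.sum]
    congr 1
    funext n
    rw [hp]
    simp [ContinuousMultilinearMap.mkPiRing_apply, smul_eq_mul, mul_comm]
  have hval : ∀ j, p.sum ((ν j : ℂ)) = 0 := by
    intro j
    rw [hsum, ← hx j, inner_g_left e he]
  have htend : Tendsto (fun j : ℕ => ((ν j : ℝ) : ℂ)) atTop
      (nhdsWithin ((3 / 4 : ℝ) : ℂ) {((3 / 4 : ℝ) : ℂ)}ᶜ) := by
    apply tendsto_nhdsWithin_of_tendsto_nhds_of_eventually_within
    · exact (Complex.continuous_ofReal.tendsto _).comp ν_tendsto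
    · apply Eventually.of_forall
      intro j
      simp only [Set.mem_compl_iff, Set.mem_singleton_iff]
      intro hle
      have := Complex.ofReal_injective hle
      exact absurd this (ne_of_lt (ν_lt j))
  have hfreq : ∃ᶠ z in nhdsWithin ((3 / 4 : ℝ) : ℂ) {((3 / 4 : ℝ) : ℂ)}ᶜ, p.sum z = 0 :=
    htend.frequently (Frequently.of_forall fun j => hval j)
  have hAOn : AnalyticOnNhd ℂ p.sum (Metric.ball (0 : ℂ) 1) := by
    intro y hy
    exact hball.analyticAt_of_mem (hmem y (by simpa using hy))
  have hth : ((3 / 4 : ℝ) : ℂ) ∈ Metric.ball (0 : ℂ) 1 := by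
    simp only [Metric.mem_ball, dist_zero_right]
    rw [Complex.norm_real]
    rw [Real.norm_eq_abs]
    rw [abs_of_nonneg (by norm_num)]
    norm_num
  have heq : Set.EqOn p.sum 0 (Metric.ball (0 : ℂ) 1) :=
    hAOn.eqOn_zero_of_preconnected_of_frequently_eq_zero
      (convex_ball (0 : ℂ) 1).isPreconnected hth hfreq
  have h0 : p.sum =ᶠ[nhds (0 : ℂ)] 0 := by
    apply Filter.eventuallyEq_of_mem (Metric.isOpen_ball.mem_nhds (by simp)) heq
  have hAt0 : HasFPowerSeriesAt p.sum p 0 := hball.hasFPowerSeriesAt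
  have hAt : HasFPowerSeriesAt 0 p 0 := hAt0.congr h0
  have hp0 : p = 0 := hAt.eq_zero
  intro k
  have : p k = 0 := by rw [hp0]; rfl
  have happ := congrArg (fun q => q (fun _ : Fin k => (1 : ℂ))) this
  simp only [ContinuousMultilinearMap.mkPiRing_apply, hp] at happ
  simpa using happ


lemma not_fd_E (n : ℕ) : ¬ FiniteDimensional ℂ (E e n) := by
  apply not_finiteDimensional_of_linearIndependent
    (fun b => (⟨e (b, 0), e_mem_E e he (Nat.zero_le n)⟩ : E e n))
  apply LinearIndependent.of_comp (E e n).subtype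
  have h : LinearIndependent ℂ (fun b : ℕ => e (b, 0)) :=
    he.linearIndependent.comp (fun b : ℕ => (b, 0)) (fun a a' h => by
      simpa using congrArg Prod.fst h)
  exact h

lemma not_fd_F (m : ℕ) : ¬ FiniteDimensional ℂ (F e m) := by
  apply not_finiteDimensional_of_linearIndependent
    (fun b => (⟨g e b 0, g_mem_F e (Nat.zero_le m)⟩ : F e m))
  apply LinearIndependent.of_comp (F e m).subtype
  rw [linearIndependent_iff']
  intro s cf hsum b hb
  have h := congrArg (fun y => ⟪e (b, 0), y⟫) hsum
  simp only [Function.comp_apply, Submodule.coe_subtype, inner_sum, inner_smul_right,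
    coord_g e he, pow_zero, mul_ite, mul_one,
    mul_zero, inner_zero_right, Finset.sum_ite_eq, hb, if_pos] at h
  exact h

lemma not_fd_quot_E (n : ℕ) :
    ¬ FiniteDimensional ℂ
      (↥(E e (n + 1)) ⧸ Submodule.comap (E e (n + 1)).subtype (E e n)) := by
  set p := Submodule.comap (E e (n + 1)).subtype (E e n) with hp
  apply not_finiteDimensional_of_linearIndependent
    (fun b => p.mkQ (⟨e (b, n + 1), e_mem_E e he le_rfl⟩ : E e (n + 1)))
  rw [linearIndependent_iff']
  intro s cf hsum b hb
  rw [show (fun b => cf b • p.mkQ (⟨e (b, n + 1), e_mem_E e he le_rfl⟩ : E e (n + 1)))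
      = fun b => p.mkQ (cf b • (⟨e (b, n + 1), e_mem_E e he le_rfl⟩ : E e (n + 1)))
      from funext fun b => (map_smul _ _ _).symm, ← map_sum] at hsum
  rw [Submodule.mkQ_apply, Submodule.Quotient.mk_eq_zero] at hsum
  rw [hp, Submodule.mem_comap] at hsum
  have hval : ((E e (n + 1)).subtype
      (∑ b ∈ s, cf b • (⟨e (b, n + 1), e_mem_E e he le_rfl⟩ : E e (n + 1))))
      = ∑ b ∈ s, cf b • e (b, n + 1) := by
    simp
  rw [hval] at hsum
  have h := hsum b (n + 1) (lt_add_one n)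
  simp only [inner_sum, inner_smul_right, inner_e_e e he, Prod.mk.injEq, mul_ite, mul_one,
    mul_zero] at h
  rw [Finset.sum_eq_single b] at h
  · simpa using h
  · intro b' hb' hne
    rw [if_neg]
    tauto
  · intro habs
    exact absurd hb habs

lemma not_fd_quot_F (m : ℕ) :
    ¬ FiniteDimensional ℂ
      (↥(F e (m + 1)) ⧸ Submodule.comap (F e (m + 1)).subtype (F e m)) := by
  set p := Submodule.comap (F e (m + 1)).subtype (F e m) with hp
  apply not_finiteDimensional_of_linearIndependent
    (fun b => p.mkQ (⟨g e b (m + 1), g_mem_F e le_rfl⟩ : F e (m + 1)))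
  rw [linearIndependent_iff']
  intro s cf hsum b hb
  rw [show (fun b => cf b • p.mkQ (⟨g e b (m + 1), g_mem_F e le_rfl⟩ : F e (m + 1)))
      = fun b => p.mkQ (cf b • (⟨g e b (m + 1), g_mem_F e le_rfl⟩ : F e (m + 1)))
      from funext fun b => (map_smul _ _ _).symm, ← map_sum] at hsum
  rw [Submodule.mkQ_apply, Submodule.Quotient.mk_eq_zero] at hsum
  rw [hp, Submodule.mem_comap] at hsum
  have hval : ((F e (m + 1)).subtype
      (∑ b ∈ s, cf b • (⟨g e b (m + 1), g_mem_F e le_rfl⟩ : F e (m + 1))))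
      = ∑ b ∈ s, cf b • g e b (m + 1) := by
    simp
  rw [hval] at hsum
  have hdeg : (P m).natDegree < m + 2 := by rw [P_natDegree]; omega
  have hz := inner_Ψ_F_zero e he b (m + 1) m (P m) hdeg
    (fun j hj => P_eval_zero hj) hsum
  simp only [inner_sum, inner_smul_right] at hz
  have hterm : ∀ b' : ℕ, ⟪Ψ e b (m + 1) (P m), g e b' (m + 1)⟫
      = if b = b' then (P m).eval ((ν (m + 1) : ℝ) : ℂ) else 0 :=
    fun b' => inner_Ψ_g e he b (m + 1) b' (m + 1) (P m) hdeg
  simp only [hterm, mul_ite, mul_zero, Finset.sum_ite_eq, hb, if_pos] at hz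
  have hne : (P m).eval ((ν (m + 1) : ℝ) : ℂ) ≠ 0 := P_eval_ne_zero (by omega)
  exact (mul_eq_zero.1 hz).resolve_right hne

lemma inter_eq_zero (htot : ∀ x : H, (∀ i, ⟪e i, x⟫ = 0) → x = 0)
    {n m : ℕ} (x : H) (hE : x ∈ E e n) (hF : x ∈ F e m) : x = 0 := by
  apply htot
  rintro ⟨b, k⟩
  set c : ℕ → ℂ := fun k => ⟪e (b, k), x⟫ with hc
  suffices hall : ∀ k, c k = 0 by exact hall k
  have key : ∀ t ≤ n, ∑ k ∈ Finset.range (n + m + 2 + 1), (P m * X ^ t).coeff k * c k = 0 := by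
    intro t ht
    have hne : (P m) ≠ 0 := (P_monic m).ne_zero
    have hdeg : (P m * X ^ t).natDegree < n + m + 2 + 1 := by
      rw [natDegree_mul hne (pow_ne_zero t X_ne_zero), P_natDegree, natDegree_X_pow]
      omega
    have hev : ∀ j ≤ m, (P m * X ^ t).eval ((ν j : ℝ) : ℂ) = 0 := by
      intro j hj
      rw [eval_mul, P_eval_zero hj, zero_mul]
    have hz := inner_Ψ_F_zero e he b (n + m + 2) m (P m * X ^ t) hdeg hev hF
    rw [inner_Ψ e] at hz
    exact hz
  have helper : ∀ t ≤ n, (∀ k, t < k → c k = 0) → c t = 0 := by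
    intro t ht hk
    have h := key t ht
    rw [Finset.sum_eq_single t] at h
    · have hco : (P m * X ^ t).coeff t = (P m).coeff 0 := by
        rw [Polynomial.coeff_mul_X_pow']
        simp
      rw [hco] at h
      exact (mul_eq_zero.1 h).resolve_left (P_coeff_zero_ne_zero m)
    · intro k hkr hne
      rcases lt_or_gt_of_ne hne with hlt | hgt
      · rw [Polynomial.coeff_mul_X_pow', if_neg (by omega), zero_mul]
      · rw [hk k hgt, mul_zero]
    · intro habs
      exact absurd (Finset.mem_range.2 (by omega)) habs
  have main : ∀ d t, t ≤ n → n - t ≤ d → c t = 0 := by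
    intro d
    induction d with
    | zero =>
      intro t ht h0
      have htn : t = n := by omega
      subst htn
      exact helper t le_rfl fun k hk => hE b k hk
    | succ d ih =>
      intro t ht h0
      apply helper t ht
      intro k hkt
      by_cases hkn : k ≤ n
      · exact ih k hkn (by omega)
      · exact hE b k (by omega)
  intro k
  by_cases hk : k ≤ n
  · exact main (n - k) k hk le_rfl
  · exact hE b k (by omega)

lemma dense_union_E (htot : ∀ x : H, (∀ i, ⟪e i, x⟫ = 0) → x = 0) :
    Dense (⋃ n, (E e n : Set H)) := by
  have hmono : Monotone (E e) := fun a b h => E_mono e h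
  rw [← Submodule.coe_iSup_of_directed _ hmono.directed_le]
  rw [dense_iff_closure_eq]
  have htop : (⨆ n, E e n).topologicalClosure = ⊤ := by
    rw [Submodule.topologicalClosure_eq_top_iff, Submodule.eq_bot_iff]
    intro x hx
    apply htot
    rintro ⟨b, k⟩
    exact (Submodule.mem_orthogonal _ x).1 hx _
      (Submodule.mem_iSup_of_mem k (e_mem_E e he le_rfl))
  rw [← Submodule.topologicalClosure_coe, htop, Submodule.top_coe]

lemma dense_union_F (htot : ∀ x : H, (∀ i, ⟪e i, x⟫ = 0) → x = 0) :
    Dense (⋃ m, (F e m : Set H)) := by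
  have hmono : Monotone (F e) := fun a b h => F_mono e h
  rw [← Submodule.coe_iSup_of_directed _ hmono.directed_le]
  rw [dense_iff_closure_eq]
  have htop : (⨆ m, F e m).topologicalClosure = ⊤ := by
    rw [Submodule.topologicalClosure_eq_top_iff, Submodule.eq_bot_iff]
    intro x hx
    apply htot
    rintro ⟨b, k⟩
    apply coords_zero_of_inner_g_zero e he b x
    intro j
    exact (Submodule.mem_orthogonal _ x).1 hx _
      (Submodule.mem_iSup_of_mem j (g_mem_F e le_rfl))
  rw [← Submodule.topologicalClosure_coe, htop, Submodule.top_coe]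

end Main

end Stmt12

/-- In a complex separable infinite-dimensional Hilbert space `H` there exist two increasing
sequences `(E n)` and `(F n)` of infinite-dimensional closed subspaces, each subspace of
infinite codimension in the next one, whose unions are both dense in `H`, and such that the
two unions intersect only in `0`. -/
theorem stmt_12 (H : Type) [NormedAddCommGroup H] [InnerProductSpace ℂ H] [CompleteSpace H]
    [TopologicalSpace.SeparableSpace H] (hdim : ¬ FiniteDimensional ℂ H) :
    ∃ E F : ℕ → Submodule ℂ H,
      (∀ n, IsClosed (E n : Set H)) ∧ (∀ n, IsClosed (F n : Set H)) ∧
      (∀ n, E n ≤ E (n + 1)) ∧ (∀ n, F n ≤ F (n + 1)) ∧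
      (∀ n, ¬ FiniteDimensional ℂ (E n)) ∧ (∀ n, ¬ FiniteDimensional ℂ (F n)) ∧
      (∀ n, ¬ FiniteDimensional ℂ
        (↥(E (n + 1)) ⧸ Submodule.comap (E (n + 1)).subtype (E n))) ∧
      (∀ n, ¬ FiniteDimensional ℂ
        (↥(F (n + 1)) ⧸ Submodule.comap (F (n + 1)).subtype (F n))) ∧
      Dense (⋃ n, (E n : Set H)) ∧ Dense (⋃ n, (F n : Set H)) ∧
      (⋃ n, (E n : Set H)) ∩ (⋃ n, (F n : Set H)) = {0} := by
  classical
  obtain ⟨w, b, hb⟩ := exists_hilbertBasis ℂ H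
  have hbo : Orthonormal ℂ ((↑) : w → H) := by
    have := b.orthonormal
    rwa [hb] at this
  have hcount : Countable w := by
    have hdisj : Pairwise (Function.onFun Disjoint fun v : w => Metric.ball (v : H) (1 / 2)) := by
      intro u v huv
      have hinner : @inner ℂ _ _ (u : H) (v : H) = 0 := by
        have := orthonormal_iff_ite.mp hbo u v
        rwa [if_neg huv] at this
      have hnu : ‖(u : H)‖ = 1 := hbo.1 u
      have hnv : ‖(v : H)‖ = 1 := hbo.1 v
      have hsq : ‖(u : H) - (v : H)‖ ^ 2 = 2 := by
        rw [@norm_sub_sq ℂ, hinner, hnu, hnv]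
        norm_num
      have hdist : (1 : ℝ) ≤ dist (u : H) (v : H) := by
        rw [dist_eq_norm]
        nlinarith [norm_nonneg ((u : H) - (v : H))]
      exact Metric.ball_disjoint_ball (by linarith)
    exact hdisj.countable_of_isOpen_disjoint (fun i => Metric.isOpen_ball)
      (fun i => ⟨_, Metric.mem_ball_self (by norm_num)⟩)
  have hinf : Infinite w := by
    by_contra hfin
    rw [not_infinite_iff_finite] at hfin
    have hwf : w.Finite := Set.finite_coe_iff.mp hfin
    have hfd : FiniteDimensional ℂ (Submodule.span ℂ w) :=
      FiniteDimensional.span_of_finite ℂ hwf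
    have hcl : IsClosed ((Submodule.span ℂ w : Submodule ℂ H) : Set H) :=
      Submodule.closed_of_finiteDimensional _
    have hdense : (Submodule.span ℂ w).topologicalClosure = ⊤ := by
      have := b.dense_span
      rwa [hb, Subtype.range_coe] at this
    have htop : Submodule.span ℂ w = ⊤ := by
      rwa [IsClosed.submodule_topologicalClosure_eq hcl] at hdense
    apply hdim
    rw [htop] at hfd
    exact Module.Finite.equiv Submodule.topEquiv
  obtain ⟨den⟩ := nonempty_denumerable (↥w)
  let q : ℕ × ℕ ≃ w := (Denumerable.eqv (ℕ × ℕ)).trans (Denumerable.eqv ↥w).symm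
  let e : ℕ × ℕ → H := fun i => ((q i : w) : H)
  have he : Orthonormal ℂ e := hbo.comp q q.injective
  have hrange : Set.range e = w := by
    ext v
    constructor
    · rintro ⟨i, rfl⟩
      exact (q i).2
    · intro hv
      exact ⟨q.symm ⟨v, hv⟩, by simp [e]⟩
  have htot : ∀ x : H, (∀ i, @inner ℂ _ _ (e i) x = 0) → x = 0 := by
    intro x hx
    have hdense : Dense ((Submodule.span ℂ (Set.range e) : Submodule ℂ H) : Set H) := by
      have hd := b.dense_span
      rw [hb, Subtype.range_coe, ← hrange] at hd
      rw [dense_iff_closure_eq, ← Submodule.topologicalClosure_coe, hd, Submodule.top_coe]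
    apply hdense.eq_zero_of_inner_right ℂ
    rintro v hv
    refine Submodule.span_induction ?_ ?_ ?_ ?_ hv
    · rintro _ ⟨i, rfl⟩
      exact hx i
    · exact inner_zero_left x
    · intro y z _ _ hy hz
      rw [inner_add_left, hy, hz, add_zero]
    · intro a y _ hy
      rw [inner_smul_left, hy, mul_zero]
  refine ⟨Stmt12.E e, Stmt12.F e, ?_, ?_, ?_, ?_, ?_, ?_, ?_, ?_, ?_, ?_, ?_⟩
  · exact fun n => Stmt12.isClosed_E e n
  · exact fun m => Stmt12.isClosed_F e m
  · exact fun n => Stmt12.E_mono e (Nat.le_succ n)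
  · exact fun m => Stmt12.F_mono e (Nat.le_succ m)
  · exact fun n => Stmt12.not_fd_E e he n
  · exact fun m => Stmt12.not_fd_F e he m
  · exact fun n => Stmt12.not_fd_quot_E e he n
  · exact fun m => Stmt12.not_fd_quot_F e he m
  · exact Stmt12.dense_union_E e he htot
  · exact Stmt12.dense_union_F e he htot
  · ext x
    constructor
    · rintro ⟨hxE, hxF⟩
      rw [Set.mem_iUnion] at hxE hxF
      obtain ⟨n, hn⟩ := hxE
      obtain ⟨m, hm⟩ := hxF
      exact Stmt12.inter_eq_zero e he htot x hn hm
    · rintro rfl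
      exact ⟨Set.mem_iUnion.2 ⟨0, (Stmt12.E e 0).zero_mem⟩,
        Set.mem_iUnion.2 ⟨0, (Stmt12.F e 0).zero_mem⟩⟩
end
end

section
/- Let z_j = 1 − 1/(j+1)² for j ≥ 0, and for w ∈ ℂ with |w| = 1 and n ≥ 0 let B_n(w) = ∏_{j ≥ n} (z_j − w)/(1 − z_j w) (an infinite product, which converges since each factor has modulus 1 and ∑_{j ≥ 0} (1 − z_j) < ∞). Then for every w with |w| = 1 and w ≠ 1, and every n with 1/(n+1)² < |1 − w|, one has |1 − B_n(w)| ≤ (2 / (|1 − w| − 1/(n+1)²)) · ∑_{j ≥ n} 1/(j+1)²; consequently B_n(w) → 1 as n → ∞ for every w on the unit circle with w ≠ 1. -/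
open Filter Complex

/-- The points `z j = 1 - 1/(j+1)²` of `(0,1)`. -/
noncomputable def zpt (j : ℕ) : ℝ := 1 - 1 / ((j : ℝ) + 1) ^ 2

/-- The tail Blaschke product `B n w = ∏_{j ≥ n} (z j - w)/(1 - z j w)`, written as an
infinite product over `j : ℕ` of the factors of index `n + j`. -/
noncomputable def Bprod (n : ℕ) (w : ℂ) : ℂ :=
  ∏' j : ℕ, (((zpt (n + j) : ℝ) : ℂ) - w) / (1 - ((zpt (n + j) : ℝ) : ℂ) * w)

noncomputable def bfac (j : ℕ) (w : ℂ) : ℂ :=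
  (((zpt j : ℝ) : ℂ) - w) / (1 - ((zpt j : ℝ) : ℂ) * w)

lemma zpt_nonneg (j : ℕ) : 0 ≤ zpt j := by
  unfold zpt
  have h1 : (1 : ℝ) ≤ ((j : ℝ) + 1) ^ 2 := by
    nlinarith [Nat.cast_nonneg (α := ℝ) j]
  have : 1 / ((j : ℝ) + 1) ^ 2 ≤ 1 := by
    rw [div_le_one (by positivity)]; exact h1
  linarith

lemma zpt_lt_one (j : ℕ) : zpt j < 1 := by
  unfold zpt
  have : (0:ℝ) < 1 / ((j : ℝ) + 1) ^ 2 := by positivity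
  linarith

lemma one_sub_zpt (j : ℕ) : 1 - zpt j = 1 / ((j : ℝ) + 1) ^ 2 := by
  unfold zpt; ring

lemma denom_ne_zero (j : ℕ) {w : ℂ} (h1 : ‖w‖ = 1) :
    (1 : ℂ) - ((zpt j : ℝ) : ℂ) * w ≠ 0 := by
  intro h
  have h2 : ‖((zpt j : ℝ) : ℂ) * w‖ = zpt j := by
    rw [norm_mul, h1, Complex.norm_real, Real.norm_eq_abs,
      _root_.abs_of_nonneg (zpt_nonneg j), mul_one]
  have : (1 : ℂ) = ((zpt j : ℝ) : ℂ) * w := by linear_combination h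
  have := congrArg norm this
  simp only [norm_one, h2] at this
  exact absurd this.symm (ne_of_lt (zpt_lt_one j))

lemma norm_bfac (j : ℕ) {w : ℂ} (h1 : ‖w‖ = 1) : ‖bfac j w‖ = 1 := by
  have hww : w * (starRingEnd ℂ) w = 1 := by
    rw [Complex.mul_conj]
    norm_cast
    rw [← Complex.sq_norm]
    rw [h1]; norm_num
  have key : (1 : ℂ) - ((zpt j : ℝ) : ℂ) * w = w * ((starRingEnd ℂ) w - ((zpt j : ℝ) : ℂ)) := by
    rw [mul_sub, hww]; ring
  have hd : ‖(1 : ℂ) - ((zpt j : ℝ) : ℂ) * w‖ = ‖((zpt j : ℝ) : ℂ) - w‖ := by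
    rw [key, norm_mul, h1, one_mul]
    have : (starRingEnd ℂ) w - ((zpt j : ℝ) : ℂ) = (starRingEnd ℂ) (w - ((zpt j : ℝ) : ℂ)) := by
      simp [map_sub, Complex.conj_ofReal]
    rw [this, RCLike.norm_conj, norm_sub_rev]
  have hne : ‖(1 : ℂ) - ((zpt j : ℝ) : ℂ) * w‖ ≠ 0 :=
    norm_ne_zero_iff.mpr (denom_ne_zero j h1)
  rw [hd] at hne
  rw [bfac, norm_div, hd, div_self hne]

lemma norm_one_sub_bfac (j : ℕ) {w : ℂ} (h1 : ‖w‖ = 1) {D : ℝ} (hD : 0 < D)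
    (hden : D ≤ ‖(1 : ℂ) - w‖ - (1 - zpt j)) :
    ‖1 - bfac j w‖ ≤ 2 / D * (1 - zpt j) := by
  have hz0 := zpt_nonneg j
  have hz1 := zpt_lt_one j
  have hne := denom_ne_zero j h1
  have hnum : (1 : ℂ) - bfac j w
      = (((1 - zpt j : ℝ) : ℂ) * (1 + w)) / (1 - ((zpt j : ℝ) : ℂ) * w) := by
    rw [bfac]
    field_simp
    push_cast
    ring
  have hdenlow : D ≤ ‖(1 : ℂ) - ((zpt j : ℝ) : ℂ) * w‖ := by
    have e : (1 : ℂ) - w = (1 - ((zpt j : ℝ) : ℂ) * w) - w * (((1 - zpt j : ℝ) : ℂ)) := by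
      push_cast; ring
    have tri : ‖(1 : ℂ) - w‖ ≤ ‖(1 : ℂ) - ((zpt j : ℝ) : ℂ) * w‖
        + ‖w * (((1 - zpt j : ℝ) : ℂ))‖ := by
      rw [e]; exact norm_sub_le _ _
    have hw1 : ‖w * (((1 - zpt j : ℝ) : ℂ))‖ = 1 - zpt j := by
      rw [norm_mul, h1, one_mul, Complex.norm_real, Real.norm_eq_abs,
        _root_.abs_of_nonneg (by linarith)]
    rw [hw1] at tri
    linarith
  have hnumle : ‖(((1 - zpt j : ℝ) : ℂ) * (1 + w))‖ ≤ 2 * (1 - zpt j) := by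
    rw [norm_mul, Complex.norm_real, Real.norm_eq_abs, _root_.abs_of_nonneg (by linarith)]
    have : ‖(1 : ℂ) + w‖ ≤ 2 := by
      calc ‖(1 : ℂ) + w‖ ≤ ‖(1 : ℂ)‖ + ‖w‖ := norm_add_le _ _
      _ = 2 := by rw [norm_one, h1]; norm_num
    nlinarith
  rw [hnum, norm_div]
  rw [div_le_iff₀ (lt_of_lt_of_le hD hdenlow)]
  have h2 : 2 / D * (1 - zpt j) * ‖(1 : ℂ) - ((zpt j : ℝ) : ℂ) * w‖
      ≥ 2 / D * (1 - zpt j) * D := by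
    have h0 : 0 ≤ 2 / D * (1 - zpt j) := mul_nonneg (by positivity) (by linarith)
    exact mul_le_mul_of_nonneg_left hdenlow h0
  have h3 : 2 / D * (1 - zpt j) * D = 2 * (1 - zpt j) := by
    field_simp
  linarith

lemma key_bound (n : ℕ) {w : ℂ} (h1 : ‖w‖ = 1)
    (hn : 1 / ((n : ℝ) + 1) ^ 2 < ‖(1 : ℂ) - w‖) :
    ‖1 - Bprod n w‖ ≤ 2 / (‖(1 : ℂ) - w‖ - 1 / ((n : ℝ) + 1) ^ 2) *
      ∑' j : ℕ, 1 / (((n + j : ℕ) : ℝ) + 1) ^ 2 := by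
  set t : ℕ → ℝ := fun k => 1 / ((k : ℝ) + 1) ^ 2 with ht
  set D : ℝ := ‖(1 : ℂ) - w‖ - 1 / ((n : ℝ) + 1) ^ 2 with hDdef
  have hD : 0 < D := by simp only [hDdef]; linarith
  set F : ℕ → ℂ := fun j => bfac (n + j) w with hF
  -- summability of t
  have ht_sum : Summable t := by
    have h0 : Summable (fun k : ℕ => 1 / (k : ℝ) ^ 2) := Real.summable_one_div_nat_pow.mpr one_lt_two
    have h1' := (summable_nat_add_iff 1).mpr h0
    refine h1'.congr fun k => ?_
    simp only [ht]; push_cast; ring_nf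
  have hshift : Summable (fun j => t (n + j)) :=
    ht_sum.comp_injective (add_right_injective n)
  set g : ℕ → ℝ := fun j => 2 / D * t (n + j) with hg
  have hg_sum : Summable g := hshift.mul_left _
  have hg_nonneg : ∀ j, 0 ≤ g j := by
    intro j; simp only [hg, ht]; positivity
  -- per-factor bound
  have htmono : ∀ j : ℕ, t (n + j) ≤ t n := by
    intro j
    simp only [ht]
    apply one_div_le_one_div_of_le (by positivity)
    have : (n : ℝ) ≤ ((n + j : ℕ) : ℝ) := by push_cast; linarith [Nat.cast_nonneg (α := ℝ) j]
    nlinarith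
  have hFb : ∀ j, ‖1 - F j‖ ≤ g j := by
    intro j
    simp only [hF, hg]
    have := norm_one_sub_bfac (n + j) h1 hD (by
      rw [one_sub_zpt]
      have := htmono j
      simp only [ht] at this ⊢
      linarith)
    rw [one_sub_zpt] at this
    simpa only [ht] using this
  have hF1 : ∀ j, ‖F j‖ = 1 := fun j => norm_bfac (n + j) h1
  have hF0 : ∀ j, F j ≠ 0 := by
    intro j h
    have := hF1 j; rw [h] at this; simp at this
  -- multipliability
  have hlog : Summable fun j => Complex.log (F j) := by
    apply Summable.of_norm_bounded_eventually_nat (g := fun j => 3 / 2 * g j)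
      (hg_sum.mul_left _)
    have hev : ∀ᶠ j in Filter.atTop, g j < 1 / 2 :=
      hg_sum.tendsto_atTop_zero.eventually (gt_mem_nhds (by norm_num))
    filter_upwards [hev] with j hj
    have h12 : ‖F j - 1‖ ≤ 1 / 2 := by
      rw [norm_sub_rev]; linarith [hFb j]
    have := Complex.norm_log_one_add_half_le_self h12
    have e : (1 : ℂ) + (F j - 1) = F j := by ring
    rw [e] at this
    refine this.trans ?_
    have h' : ‖F j - 1‖ ≤ g j := by rw [norm_sub_rev]; exact hFb j
    linarith
  have hM : Multipliable F :=
    Complex.multipliable_of_summable_log hlog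
  have hHas : HasProd F (Bprod n w) := by
    have : Bprod n w = ∏' j, F j := rfl
    rw [this]
    exact hM.hasProd
  -- finite product bound
  have hfin : ∀ s : Finset ℕ, ‖1 - ∏ j ∈ s, F j‖ ≤ ∑ j ∈ s, ‖1 - F j‖ := by
    intro s
    induction s using Finset.cons_induction with
    | empty => simp
    | cons a s ha ih =>
      rw [Finset.prod_cons, Finset.sum_cons]
      calc ‖1 - F a * ∏ j ∈ s, F j‖
          = ‖(1 - F a) + F a * (1 - ∏ j ∈ s, F j)‖ := by congr 1; ring
        _ ≤ ‖1 - F a‖ + ‖F a * (1 - ∏ j ∈ s, F j)‖ := norm_add_le _ _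
        _ = ‖1 - F a‖ + ‖1 - ∏ j ∈ s, F j‖ := by rw [norm_mul, hF1 a, one_mul]
        _ ≤ _ := by linarith
  have hfin2 : ∀ s : Finset ℕ, ‖1 - ∏ j ∈ s, F j‖ ≤ 2 / D * ∑' j, t (n + j) := by
    intro s
    calc ‖1 - ∏ j ∈ s, F j‖ ≤ ∑ j ∈ s, ‖1 - F j‖ := hfin s
      _ ≤ ∑ j ∈ s, g j := Finset.sum_le_sum fun j _ => hFb j
      _ ≤ ∑' j, g j := Summable.sum_le_tsum s (fun j _ => hg_nonneg j) hg_sum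
      _ = 2 / D * ∑' j, t (n + j) := tsum_mul_left
  -- pass to the limit
  have hTend : Filter.Tendsto (fun s : Finset ℕ => ‖1 - ∏ j ∈ s, F j‖)
      Filter.atTop (nhds ‖1 - Bprod n w‖) := by
    exact ((Filter.Tendsto.const_sub 1 hHas).norm)
  have := le_of_tendsto hTend (Filter.Eventually.of_forall hfin2)
  exact this

lemma tail_tsum_tendsto :
    Filter.Tendsto (fun n : ℕ => ∑' j : ℕ, 1 / (((n + j : ℕ) : ℝ) + 1) ^ 2)
      Filter.atTop (nhds 0) := by
  have h := tendsto_sum_nat_add (fun k : ℕ => 1 / ((k : ℝ) + 1) ^ 2)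
  refine h.congr fun n => tsum_congr fun j => ?_
  rw [add_comm j n]

lemma inv_sq_tendsto :
    Filter.Tendsto (fun n : ℕ => 1 / ((n : ℝ) + 1) ^ 2) Filter.atTop (nhds 0) := by
  have h := tendsto_one_div_add_atTop_nhds_zero_nat (𝕜 := ℝ)
  refine squeeze_zero (fun n => by positivity) (fun n => ?_) h
  have h1 : (1 : ℝ) ≤ (n : ℝ) + 1 := by linarith [Nat.cast_nonneg (α := ℝ) n]
  rw [div_le_div_iff₀ (by positivity) (by positivity)]
  nlinarith

/-- For `w` on the unit circle with `w ≠ 1` and `n` with `1/(n+1)² < |1 - w|`, one has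
`|1 - B n w| ≤ (2 / (|1 - w| - 1/(n+1)²)) · ∑_{j ≥ n} 1/(j+1)²`; consequently
`B n w → 1` as `n → ∞` for every such `w`. -/
theorem stmt_13 :
    (∀ w : ℂ, ‖w‖ = 1 → w ≠ 1 → ∀ n : ℕ, 1 / ((n : ℝ) + 1) ^ 2 < ‖1 - w‖ →
      ‖1 - Bprod n w‖ ≤ 2 / (‖1 - w‖ - 1 / ((n : ℝ) + 1) ^ 2) *
        ∑' j : ℕ, 1 / (((n + j : ℕ) : ℝ) + 1) ^ 2) ∧
    (∀ w : ℂ, ‖w‖ = 1 → w ≠ 1 →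
      Filter.Tendsto (fun n : ℕ => Bprod n w) Filter.atTop (nhds 1)) := by
  constructor
  · intro w h1 _ n hn
    exact key_bound n h1 hn
  · intro w h1 hw
    have hc : 0 < ‖(1 : ℂ) - w‖ := by
      rw [norm_pos_iff]
      intro h
      exact hw (by linear_combination -h)
    set c := ‖(1 : ℂ) - w‖ with hcdef
    -- the bound tends to zero
    have hbound : Filter.Tendsto
        (fun n : ℕ => 2 / (c - 1 / ((n : ℝ) + 1) ^ 2) *
          ∑' j : ℕ, 1 / (((n + j : ℕ) : ℝ) + 1) ^ 2) Filter.atTop (nhds 0) := by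
      have hden : Filter.Tendsto (fun n : ℕ => c - 1 / ((n : ℝ) + 1) ^ 2)
          Filter.atTop (nhds c) := by
        simpa using tendsto_const_nhds.sub inv_sq_tendsto
      have hfrac : Filter.Tendsto (fun n : ℕ => 2 / (c - 1 / ((n : ℝ) + 1) ^ 2))
          Filter.atTop (nhds (2 / c)) :=
        tendsto_const_nhds.div hden (ne_of_gt hc)
      simpa using hfrac.mul tail_tsum_tendsto
    have hev : ∀ᶠ n : ℕ in Filter.atTop, 1 / ((n : ℝ) + 1) ^ 2 < c :=
      inv_sq_tendsto.eventually (gt_mem_nhds hc)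
    have hnorm0 : Filter.Tendsto (fun n : ℕ => ‖1 - Bprod n w‖) Filter.atTop (nhds 0) := by
      refine squeeze_zero' (Filter.Eventually.of_forall fun n => norm_nonneg _) ?_ hbound
      filter_upwards [hev] with n hn
      exact key_bound n h1 hn
    have : Filter.Tendsto (fun n : ℕ => ‖Bprod n w - 1‖) Filter.atTop (nhds 0) := by
      refine hnorm0.congr fun n => ?_
      rw [norm_sub_rev]
    exact tendsto_iff_norm_sub_tendsto_zero.mpr this
end
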